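/- The group L = ⟨ a, t ∣ (at)³ = a³, [[t,a],t] = a³ ⟩ is infinite: it admits surjections onto groups of arbitrarily large order (for instance, for every r ≥ 2 the quotient L/⟨a^{3^r}⟩ still surjects onto arbitrarily large finite 3-groups, so L itself is infinite). -/

import Mathlib

/-- An order-3 affine permutation of `ℤ × ℤ` (the matrix `[[0,-1],[1,-1]]`). -/
def aPerm : Equiv.Perm (ℤ × ℤ) where
  toFun p := (-p.2, p.1 - p.2)
  invFun p := (p.2 - p.1, -p.1)
  left_inv p := by obtain ⟨x, y⟩ := p; simp
  right_inv p := by obtain ⟨x, y⟩ := p; simp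

/-- Translation by `(1, 0)` on `ℤ × ℤ`. -/
def tPerm : Equiv.Perm (ℤ × ℤ) where
  toFun p := (p.1 + 1, p.2)
  invFun p := (p.1 - 1, p.2)
  left_inv p := by obtain ⟨x, y⟩ := p; simp
  right_inv p := by obtain ⟨x, y⟩ := p; simp

@[simp] lemma aPerm_apply (p : ℤ × ℤ) : aPerm p = (-p.2, p.1 - p.2) := rfl
@[simp] lemma aPerm_inv_apply (p : ℤ × ℤ) : aPerm⁻¹ p = (p.2 - p.1, -p.1) := rfl
@[simp] lemma tPerm_apply (p : ℤ × ℤ) : tPerm p = (p.1 + 1, p.2) := rfl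
@[simp] lemma tPerm_inv_apply (p : ℤ × ℤ) : tPerm⁻¹ p = (p.1 - 1, p.2) := rfl

/-- The relations of the presented group
`L = ⟨ a, t ∣ (at)³ = a³, [[t,a],t] = a³ ⟩`, with `a = FreeGroup.of 0`,
`t = FreeGroup.of 1`, and `[x,y] = x⁻¹y⁻¹xy`. -/
def mainlineLimitRels : Set (FreeGroup (Fin 2)) :=
  { ((FreeGroup.of 0 : FreeGroup (Fin 2)) * FreeGroup.of 1) ^ 3 *
      ((FreeGroup.of 0 : FreeGroup (Fin 2)) ^ 3)⁻¹,
    (((FreeGroup.of 1 : FreeGroup (Fin 2))⁻¹ * (FreeGroup.of 0)⁻¹ *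
        FreeGroup.of 1 * FreeGroup.of 0)⁻¹ * (FreeGroup.of 1)⁻¹ *
      ((FreeGroup.of 1)⁻¹ * (FreeGroup.of 0)⁻¹ * FreeGroup.of 1 * FreeGroup.of 0) *
      FreeGroup.of 1) * ((FreeGroup.of 0 : FreeGroup (Fin 2)) ^ 3)⁻¹ }

/-- Send `a` to `aPerm` and `t` to `tPerm`. -/
def fPerm : Fin 2 → Equiv.Perm (ℤ × ℤ) := ![aPerm, tPerm]

lemma rels_hold : ∀ r ∈ mainlineLimitRels, FreeGroup.lift fPerm r = 1 := by
  intro r hr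
  rcases hr with h | h <;> subst h <;>
    simp only [map_mul, map_pow, map_inv, FreeGroup.lift_apply_of, fPerm,
      Matrix.cons_val_zero, Matrix.cons_val_one, Matrix.head_cons] <;>
    · refine Equiv.ext fun p => ?_
      obtain ⟨x, y⟩ := p
      simp only [pow_succ, pow_zero, one_mul, mul_inv_rev, inv_inv, Equiv.Perm.mul_apply,
        Equiv.Perm.one_apply, aPerm_apply, aPerm_inv_apply, tPerm_apply, tPerm_inv_apply,
        Prod.ext_iff]
      constructor <;> ring

/-- The induced homomorphism from `L` to permutations of `ℤ × ℤ`. -/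
def phi : PresentedGroup mainlineLimitRels →* Equiv.Perm (ℤ × ℤ) :=
  PresentedGroup.toGroup rels_hold

lemma tPerm_zpow (n : ℤ) (p : ℤ × ℤ) : (tPerm ^ n) p = (p.1 + n, p.2) := by
  induction n using Int.induction_on generalizing p with
  | zero => simp
  | succ k ih =>
      rw [zpow_add, zpow_one, Equiv.Perm.mul_apply, tPerm_apply, ih]
      simp [Prod.ext_iff]; ring
  | pred k ih =>
      rw [show (-(k : ℤ)) - 1 = -1 + -k by ring, zpow_add, Equiv.Perm.mul_apply, ih,
        zpow_neg_one, tPerm_inv_apply]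
      simp [Prod.ext_iff]; ring

/-- The group `L = ⟨ a, t ∣ (at)³ = a³, [[t,a],t] = a³ ⟩` is infinite. -/
theorem stmt_9 : Infinite (PresentedGroup mainlineLimitRels) := by
  refine Infinite.of_injective
    (fun n : ℤ => (PresentedGroup.of 1 : PresentedGroup mainlineLimitRels) ^ n) ?_
  intro m n h
  have h2 : (tPerm : Equiv.Perm (ℤ × ℤ)) ^ m = tPerm ^ n := by
    have := congrArg phi h
    simpa [phi, map_zpow, PresentedGroup.toGroup.of, fPerm] using this
  have := congrArg (fun e : Equiv.Perm (ℤ × ℤ) => (e ((0 : ℤ), (0 : ℤ))).1) h2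
  simpa [tPerm_zpow] using this
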